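/- Let (Γ, μ) be a measure space, S₀, S₁, c_m > 0, τ_ep, τ_res > 0, and let β : ℝ → ℝ be Lipschitz continuous with constant L_β. Then there exists a constant C, depending only on τ_ep, τ_res and L_β, such that for all u₁, u₂ ∈ L²(μ) ∩ L⁴(μ) and w₁, w₂ ∈ L²(μ) with 0 ≤ w₁ ≤ 1 μ-a.e.: −(1/c_m)·∫_Γ ((S₀ + S₁·w₁)·u₁ − (S₀ + S₁·w₂)·u₂)·(u₁ − u₂) dμ + ∫_Γ (f(u₁,w₁) − f(u₂,w₂))·(w₁ − w₂) dμ ≤ (S₁/c_m)·‖w₁ − w₂‖_{L²(μ)}·‖u₂‖_{L⁴(μ)}·‖u₁ − u₂‖_{L⁴(μ)} + C·(‖u₁ − u₂‖²_{L²(μ)} + ‖w₁ − w₂‖²_{L²(μ)}). -/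

import Mathlib

open MeasureTheory
open scoped ENNReal

/-- The electroporation nonlinearity
`f(v,w) = max((β(v) − w)/τ_ep, (β(v) − w)/τ_res)`. -/
noncomputable def epF (τep τres : ℝ) (β : ℝ → ℝ) (v w : ℝ) : ℝ :=
  max ((β v - w) / τep) ((β v - w) / τres)

section Aux

variable {Γ : Type*} [MeasurableSpace Γ] {μ : Measure Γ}

/-- Hölder: product of `L^p` and `L^q` functions (`1 = 1/p + 1/q`) is integrable and
the integral of the absolute value is bounded by the product of norms. -/
lemma holder_pair {p q : ℝ≥0∞} (hpq : (1:ℝ≥0∞)/1 = 1/p + 1/q)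
    {f g : Γ → ℝ} (hf : MemLp f p μ) (hg : MemLp g q μ) :
    Integrable (fun x => f x * g x) μ ∧
      ∫ x, |f x * g x| ∂μ ≤ (eLpNorm f p μ).toReal * (eLpNorm g q μ).toReal := by
  have heq : f • g = fun x => f x * g x := rfl
  have hmem : MemLp (fun x => f x * g x) 1 μ := by
    have h0 : MemLp (f • g) 1 μ := hg.smul hf (hpqr := ⟨by simpa only [one_div] using hpq.symm⟩)
    rwa [heq] at h0
  have hint : Integrable (fun x => f x * g x) μ := memLp_one_iff_integrable.mp hmem
  refine ⟨hint, ?_⟩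
  have h1 : ∫ x, |f x * g x| ∂μ = (eLpNorm (fun x => f x * g x) 1 μ).toReal := by
    rw [eLpNorm_one_eq_lintegral_enorm, ← integral_norm_eq_lintegral_enorm hmem.1]
    simp only [Real.norm_eq_abs]
  have h2 : eLpNorm (fun x => f x * g x) 1 μ ≤ eLpNorm f p μ * eLpNorm g q μ := by
    have h0 : eLpNorm (f • g) 1 μ ≤ eLpNorm f p μ * eLpNorm g q μ :=
      eLpNorm_smul_le_mul_eLpNorm hg.1 hf.1 (hpqr := ⟨by simpa only [one_div] using hpq.symm⟩)
    rwa [heq] at h0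
  rw [h1]
  calc (eLpNorm (fun x => f x * g x) 1 μ).toReal
      ≤ (eLpNorm f p μ * eLpNorm g q μ).toReal :=
        ENNReal.toReal_mono (ENNReal.mul_ne_top hf.eLpNorm_ne_top hg.eLpNorm_ne_top) h2
    _ = _ := ENNReal.toReal_mul

lemma one_eq_half_add_half : (1:ℝ≥0∞)/1 = 1/2 + 1/2 := by
  rw [ENNReal.div_add_div_same]
  norm_num
  exact (ENNReal.div_self (by norm_num) (by norm_num)).symm

lemma half_eq_quarter_add_quarter : (1:ℝ≥0∞)/2 = 1/4 + 1/4 := by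
  rw [ENNReal.div_add_div_same]
  rw [show (4:ℝ≥0∞) = 2*2 by norm_num, ENNReal.div_eq_div_iff] <;> norm_num

/-- Three-factor Hölder with exponents 2, 4, 4. -/
lemma holder_triple {f g h : Γ → ℝ} (hf : MemLp f 2 μ) (hg : MemLp g 4 μ)
    (hh : MemLp h 4 μ) :
    Integrable (fun x => f x * (g x * h x)) μ ∧
      ∫ x, |f x * (g x * h x)| ∂μ ≤
        (eLpNorm f 2 μ).toReal * ((eLpNorm g 4 μ).toReal * (eLpNorm h 4 μ).toReal) := by
  have heq : g • h = fun x => g x * h x := rfl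
  have hgh : MemLp (fun x => g x * h x) 2 μ := by
    have h0 : MemLp (g • h) 2 μ := hh.smul hg (hpqr := ⟨by simpa only [one_div] using half_eq_quarter_add_quarter.symm⟩)
    rwa [heq] at h0
  obtain ⟨hint, hle⟩ := holder_pair one_eq_half_add_half hf hgh
  refine ⟨hint, hle.trans ?_⟩
  refine mul_le_mul_of_nonneg_left ?_ ENNReal.toReal_nonneg
  have h2 : eLpNorm (fun x => g x * h x) 2 μ ≤ eLpNorm g 4 μ * eLpNorm h 4 μ := by
    have h0 : eLpNorm (g • h) 2 μ ≤ eLpNorm g 4 μ * eLpNorm h 4 μ :=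
      eLpNorm_smul_le_mul_eLpNorm hh.1 hg.1 (hpqr := ⟨by simpa only [one_div] using half_eq_quarter_add_quarter.symm⟩)
    rwa [heq] at h0
  calc (eLpNorm (fun x => g x * h x) 2 μ).toReal
      ≤ (eLpNorm g 4 μ * eLpNorm h 4 μ).toReal :=
        ENNReal.toReal_mono (ENNReal.mul_ne_top hg.eLpNorm_ne_top hh.eLpNorm_ne_top) h2
    _ = _ := ENNReal.toReal_mul

/-- Lipschitz estimate for the electroporation nonlinearity. -/
lemma epF_lip {τep τres Lβ : ℝ} (hep : 0 < τep) (hres : 0 < τres) {β : ℝ → ℝ}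
    (hβ : ∀ x y : ℝ, |β x - β y| ≤ Lβ * |x - y|) (v₁ w₁ v₂ w₂ : ℝ) :
    |epF τep τres β v₁ w₁ - epF τep τres β v₂ w₂| ≤
      max (1/τep) (1/τres) * (Lβ * |v₁ - v₂| + |w₁ - w₂|) := by
  set M := max (1/τep) (1/τres) with hM
  have key : ∀ a b : ℝ, |max (a/τep) (a/τres) - max (b/τep) (b/τres)| ≤ M * |a - b| := by
    intro a b
    refine (abs_max_sub_max_le_max _ _ _ _).trans ?_
    rw [div_sub_div_same, div_sub_div_same, abs_div, abs_div,
      abs_of_pos hep, abs_of_pos hres]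
    have h1 : |a - b| / τep ≤ M * |a - b| := by
      rw [div_eq_mul_one_div, mul_comm]
      exact mul_le_mul_of_nonneg_right (le_max_left _ _) (abs_nonneg _)
    have h2 : |a - b| / τres ≤ M * |a - b| := by
      rw [div_eq_mul_one_div, mul_comm]
      exact mul_le_mul_of_nonneg_right (le_max_right _ _) (abs_nonneg _)
    exact max_le h1 h2
  have hM0 : 0 ≤ M := le_trans (by positivity) (le_max_left (1/τep) (1/τres))
  calc |epF τep τres β v₁ w₁ - epF τep τres β v₂ w₂|
      ≤ M * |(β v₁ - w₁) - (β v₂ - w₂)| := key _ _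
    _ ≤ M * (|β v₁ - β v₂| + |w₁ - w₂|) := by
        refine mul_le_mul_of_nonneg_left ?_ hM0
        calc |(β v₁ - w₁) - (β v₂ - w₂)| = |(β v₁ - β v₂) - (w₁ - w₂)| := by ring_nf
          _ ≤ |β v₁ - β v₂| + |w₁ - w₂| := abs_sub _ _
    _ ≤ M * (Lβ * |v₁ - v₂| + |w₁ - w₂|) := by
        exact mul_le_mul_of_nonneg_left (add_le_add_left (hβ v₁ v₂) _) hM0

end Aux

/-- Generalized local monotonicity of the reaction part
`F(U) = (−S_m(v,w)/c_m, f(v,w))` of the drift in the electroporation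
SPDE–ODE system. -/
theorem reaction_local_monotonicity {Γ : Type*} [MeasurableSpace Γ]
    (μ : Measure Γ)
    (S₀ S₁ cm τep τres Lβ : ℝ)
    (hS₀ : 0 < S₀) (hS₁ : 0 < S₁) (hcm : 0 < cm)
    (hep : 0 < τep) (hres : 0 < τres)
    (β : ℝ → ℝ) (hβ : ∀ x y : ℝ, |β x - β y| ≤ Lβ * |x - y|) :
    ∃ C : ℝ, ∀ u₁ u₂ w₁ w₂ : Γ → ℝ,
      MemLp u₁ 2 μ → MemLp u₁ 4 μ → MemLp u₂ 2 μ → MemLp u₂ 4 μ →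
      MemLp w₁ 2 μ → MemLp w₂ 2 μ →
      (∀ᵐ x ∂μ, 0 ≤ w₁ x ∧ w₁ x ≤ 1) →
      -(1 / cm) *
          ∫ x, ((S₀ + S₁ * w₁ x) * u₁ x - (S₀ + S₁ * w₂ x) * u₂ x) * (u₁ x - u₂ x) ∂μ
        + ∫ x, (epF τep τres β (u₁ x) (w₁ x) - epF τep τres β (u₂ x) (w₂ x))
            * (w₁ x - w₂ x) ∂μ
        ≤ (S₁ / cm) * (eLpNorm (w₁ - w₂) 2 μ).toReal * (eLpNorm u₂ 4 μ).toReal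
            * (eLpNorm (u₁ - u₂) 4 μ).toReal
          + C * (((eLpNorm (u₁ - u₂) 2 μ).toReal) ^ 2
              + ((eLpNorm (w₁ - w₂) 2 μ).toReal) ^ 2) := by
  have hLβ : 0 ≤ Lβ := by
    have := (abs_nonneg (β 1 - β 0)).trans (hβ 1 0)
    simpa using this
  set M := max (1/τep) (1/τres) with hMdef
  have hM0 : 0 ≤ M := le_trans (by positivity) (le_max_left (1/τep) (1/τres))
  have hβc : Continuous β := by
    have : LipschitzWith (Real.toNNReal Lβ) β :=
      LipschitzWith.of_dist_le_mul (fun x y => by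
        simpa [Real.dist_eq, Real.coe_toNNReal Lβ hLβ] using hβ x y)
    exact this.continuous
  refine ⟨M * (Lβ + 1), ?_⟩
  intro u₁ u₂ w₁ w₂ hu₁2 hu₁4 hu₂2 hu₂4 hw₁ hw₂ hw₁bd
  have hdu2 : MemLp (u₁ - u₂) 2 μ := hu₁2.sub hu₂2
  have hdu4 : MemLp (u₁ - u₂) 4 μ := hu₁4.sub hu₂4
  have hdw2 : MemLp (w₁ - w₂) 2 μ := hw₁.sub hw₂
  set a := (eLpNorm (u₁ - u₂) 2 μ).toReal with ha_def
  set b := (eLpNorm (w₁ - w₂) 2 μ).toReal with hb_def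
  set c := (eLpNorm u₂ 4 μ).toReal with hc_def
  set d := (eLpNorm (u₁ - u₂) 4 μ).toReal with hd_def
  have ha : 0 ≤ a := ENNReal.toReal_nonneg
  have hb : 0 ≤ b := ENNReal.toReal_nonneg
  have hc : 0 ≤ c := ENNReal.toReal_nonneg
  have hd : 0 ≤ d := ENNReal.toReal_nonneg
  -- Hölder facts
  obtain ⟨hB_int, hB_est⟩ := holder_triple hdw2 hu₂4 hdu4
  obtain ⟨hdudw_int, hdudw_est⟩ := holder_pair one_eq_half_add_half hdu2 hdw2
  obtain ⟨hdwdw_int, hdwdw_est⟩ := holder_pair one_eq_half_add_half hdw2 hdw2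
  obtain ⟨hdudu_int, -⟩ := holder_pair one_eq_half_add_half hdu2 hdu2
  simp only [Pi.sub_apply] at hB_int hB_est hdudw_int hdudw_est hdwdw_int hdwdw_est hdudu_int
  replace hB_est : ∫ x, |(w₁ x - w₂ x) * (u₂ x * (u₁ x - u₂ x))| ∂μ ≤ b * (c * d) := hB_est
  replace hdudw_est : ∫ x, |(u₁ x - u₂ x) * (w₁ x - w₂ x)| ∂μ ≤ a * b := hdudw_est
  replace hdwdw_est : ∫ x, |(w₁ x - w₂ x) * (w₁ x - w₂ x)| ∂μ ≤ b * b := hdwdw_est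
  -- integrability of the first integrand pieces
  have hA_int : Integrable (fun x => (S₀ + S₁ * w₁ x) *
      ((u₁ x - u₂ x) * (u₁ x - u₂ x))) μ := by
    refine Integrable.bdd_mul (c := S₀ + S₁) hdudu_int
      (aestronglyMeasurable_const.add (hw₁.1.const_mul S₁)) ?_
    filter_upwards [hw₁bd] with x hx
    rw [Real.norm_eq_abs, abs_of_nonneg (by nlinarith [hx.1])]
    nlinarith [hx.2]
  have hA_nonneg : 0 ≤ ∫ x, (S₀ + S₁ * w₁ x) * ((u₁ x - u₂ x) * (u₁ x - u₂ x)) ∂μ := by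
    refine integral_nonneg_of_ae ?_
    filter_upwards [hw₁bd] with x hx
    have h1 : 0 ≤ S₀ + S₁ * w₁ x := by nlinarith [hx.1]
    exact mul_nonneg h1 (mul_self_nonneg _)
  have hI₁ : ∫ x, ((S₀ + S₁ * w₁ x) * u₁ x - (S₀ + S₁ * w₂ x) * u₂ x) * (u₁ x - u₂ x) ∂μ
      = (∫ x, (S₀ + S₁ * w₁ x) * ((u₁ x - u₂ x) * (u₁ x - u₂ x)) ∂μ)
        + S₁ * ∫ x, (w₁ x - w₂ x) * (u₂ x * (u₁ x - u₂ x)) ∂μ := by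
    rw [show (fun x => ((S₀ + S₁ * w₁ x) * u₁ x - (S₀ + S₁ * w₂ x) * u₂ x) * (u₁ x - u₂ x))
        = fun x => (S₀ + S₁ * w₁ x) * ((u₁ x - u₂ x) * (u₁ x - u₂ x))
            + S₁ * ((w₁ x - w₂ x) * (u₂ x * (u₁ x - u₂ x))) from funext fun x => by ring]
    rw [integral_add hA_int (hB_int.const_mul S₁), integral_const_mul]
  -- estimate for ∫ B
  have hBabs : |∫ x, (w₁ x - w₂ x) * (u₂ x * (u₁ x - u₂ x)) ∂μ| ≤ b * (c * d) := by
    refine le_trans ?_ hB_est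
    calc |∫ x, (w₁ x - w₂ x) * (u₂ x * (u₁ x - u₂ x)) ∂μ|
        = ‖∫ x, (w₁ x - w₂ x) * (u₂ x * (u₁ x - u₂ x)) ∂μ‖ := (Real.norm_eq_abs _).symm
      _ ≤ ∫ x, ‖(w₁ x - w₂ x) * (u₂ x * (u₁ x - u₂ x))‖ ∂μ := norm_integral_le_integral_norm _
      _ = ∫ x, |(w₁ x - w₂ x) * (u₂ x * (u₁ x - u₂ x))| ∂μ := by
          simp only [Real.norm_eq_abs]
  -- abstract inequality for the first term
  have habs : ∀ X Y : ℝ, 0 ≤ X → -Y ≤ b * (c * d) →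
      -(1 / cm) * (X + S₁ * Y) ≤ (S₁ / cm) * (b * (c * d)) := by
    intro X Y hX hY
    have h4 : (S₁ / cm) * (-Y) ≤ (S₁ / cm) * (b * (c * d)) :=
      mul_le_mul_of_nonneg_left hY (by positivity)
    have h5 : 0 ≤ (1 / cm) * X := by positivity
    have h6 : -(1 / cm) * (X + S₁ * Y) = -((1 / cm) * X) + (S₁ / cm) * (-Y) := by
      field_simp
      ring
    rw [h6]
    linarith
  have hT1 : -(1 / cm) *
      ∫ x, ((S₀ + S₁ * w₁ x) * u₁ x - (S₀ + S₁ * w₂ x) * u₂ x) * (u₁ x - u₂ x) ∂μ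
      ≤ (S₁ / cm) * (b * (c * d)) := by
    rw [hI₁]
    exact habs _ _ hA_nonneg ((neg_le_abs _).trans hBabs)
  -- the nonlinearity difference
  have hFc : Continuous (fun p : ℝ × ℝ => epF τep τres β p.1 p.2) := by
    have hg1 : Continuous (fun p : ℝ × ℝ => β p.1 - p.2) :=
      (hβc.comp continuous_fst).sub continuous_snd
    exact (hg1.div_const τep).max (hg1.div_const τres)
  have hf₁m : AEStronglyMeasurable (fun x => epF τep τres β (u₁ x) (w₁ x)) μ :=
    hFc.comp_aestronglyMeasurable (hu₁2.1.prodMk hw₁.1)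
  have hf₂m : AEStronglyMeasurable (fun x => epF τep τres β (u₂ x) (w₂ x)) μ :=
    hFc.comp_aestronglyMeasurable (hu₂2.1.prodMk hw₂.1)
  have hptw : ∀ x, |(epF τep τres β (u₁ x) (w₁ x) - epF τep τres β (u₂ x) (w₂ x))
        * (w₁ x - w₂ x)| ≤
      M * Lβ * |(u₁ x - u₂ x) * (w₁ x - w₂ x)| + M * |(w₁ x - w₂ x) * (w₁ x - w₂ x)| := by
    intro x
    have h1 : |epF τep τres β (u₁ x) (w₁ x) - epF τep τres β (u₂ x) (w₂ x)| ≤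
        M * (Lβ * |u₁ x - u₂ x| + |w₁ x - w₂ x|) := epF_lip hep hres hβ _ _ _ _
    calc |(epF τep τres β (u₁ x) (w₁ x) - epF τep τres β (u₂ x) (w₂ x)) * (w₁ x - w₂ x)|
        = |epF τep τres β (u₁ x) (w₁ x) - epF τep τres β (u₂ x) (w₂ x)| * |w₁ x - w₂ x| :=
          abs_mul _ _
      _ ≤ (M * (Lβ * |u₁ x - u₂ x| + |w₁ x - w₂ x|)) * |w₁ x - w₂ x| :=
          mul_le_mul_of_nonneg_right h1 (abs_nonneg _)
      _ = M * Lβ * (|u₁ x - u₂ x| * |w₁ x - w₂ x|)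
          + M * (|w₁ x - w₂ x| * |w₁ x - w₂ x|) := by ring
      _ = M * Lβ * |(u₁ x - u₂ x) * (w₁ x - w₂ x)|
          + M * |(w₁ x - w₂ x) * (w₁ x - w₂ x)| := by rw [abs_mul, abs_mul]
  have hG_int : Integrable (fun x => M * Lβ * |(u₁ x - u₂ x) * (w₁ x - w₂ x)|
      + M * |(w₁ x - w₂ x) * (w₁ x - w₂ x)|) μ :=
    ((hdudw_int.abs).const_mul _).add ((hdwdw_int.abs).const_mul _)
  have hfd_int : Integrable (fun x => (epF τep τres β (u₁ x) (w₁ x)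
      - epF τep τres β (u₂ x) (w₂ x)) * (w₁ x - w₂ x)) μ := by
    refine hG_int.mono ((hf₁m.sub hf₂m).mul (hw₁.1.sub hw₂.1)) ?_
    filter_upwards with x
    rw [Real.norm_eq_abs, Real.norm_eq_abs]
    exact (hptw x).trans (le_abs_self _)
  have hT2 : ∫ x, (epF τep τres β (u₁ x) (w₁ x) - epF τep τres β (u₂ x) (w₂ x))
        * (w₁ x - w₂ x) ∂μ ≤ M * Lβ * (a * b) + M * (b * b) := by
    calc ∫ x, (epF τep τres β (u₁ x) (w₁ x) - epF τep τres β (u₂ x) (w₂ x))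
          * (w₁ x - w₂ x) ∂μ
        ≤ ∫ x, M * Lβ * |(u₁ x - u₂ x) * (w₁ x - w₂ x)|
            + M * |(w₁ x - w₂ x) * (w₁ x - w₂ x)| ∂μ := by
          refine integral_mono hfd_int hG_int ?_
          intro x
          exact (le_abs_self _).trans (hptw x)
      _ = M * Lβ * (∫ x, |(u₁ x - u₂ x) * (w₁ x - w₂ x)| ∂μ)
          + M * ∫ x, |(w₁ x - w₂ x) * (w₁ x - w₂ x)| ∂μ := by
          rw [integral_add ((hdudw_int.abs).const_mul _) ((hdwdw_int.abs).const_mul _),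
            integral_const_mul, integral_const_mul]
      _ ≤ M * Lβ * (a * b) + M * (b * b) := by
          have h1 := mul_le_mul_of_nonneg_left hdudw_est (mul_nonneg hM0 hLβ)
          have h2 := mul_le_mul_of_nonneg_left hdwdw_est hM0
          linarith
  have hgoal2 : M * Lβ * (a * b) + M * (b * b) ≤ M * (Lβ + 1) * (a ^ 2 + b ^ 2) := by
    nlinarith [sq_nonneg (a - b), mul_nonneg (mul_nonneg hM0 hLβ) (sq_nonneg (a - b)),
      mul_nonneg hM0 (sq_nonneg a), mul_nonneg hM0 (sq_nonneg b)]
  have hsum := add_le_add hT1 hT2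
  have hrw : (S₁ / cm) * (b * (c * d)) = (S₁ / cm) * b * c * d := by ring
  linarith [hsum, hgoal2]
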